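/- Let U be a type and C : U → Set U with u ∈ C(u) for every u (unit-diagonal connectivity). Call a nonempty finite subset Z ⊆ U a cluster if for every nonempty proper subset Y ⊊ Z one has C^T(Y) ∩ C^T(Z∖Y) ≠ ∅, where C^T(Z) = ⋃_{a∈Z} C(a). Define the extended cooperation graph whose vertices are the clusters, two distinct clusters Z, Z' being adjacent iff C^T(Z) ∩ C^T(Z') = ∅. Then the map sending a finite clique 𝔷 of this graph to the union ⋃_{Z∈𝔷} Z is a bijection between the finite cliques of the extended cooperation graph and the finite subsets of U. -/

import Mathlib

/-- A cluster is a nonempty finite coverage-connected set of devices: it cannot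
be split into two nonempty sub-clusters with disjoint total coverage zones
`C^T(Z) = ⋃_{a∈Z} C(a)`. -/
def IsCluster {U : Type*} [DecidableEq U] (C : U → Set U) (Z : Finset U) : Prop :=
  Z.Nonempty ∧ ∀ Y : Finset U, Y ⊆ Z → Y.Nonempty → Y ≠ Z →
    ((⋃ a ∈ Y, C a) ∩ (⋃ a ∈ Z \ Y, C a)).Nonempty

/-- The extended cooperation graph: vertices are the clusters, two distinct
clusters being adjacent iff their total coverage zones are disjoint. -/
def extendedCooperationGraph {U : Type*} [DecidableEq U] (C : U → Set U) :
    SimpleGraph {Z : Finset U // IsCluster C Z} where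
  Adj Z Z' := Z ≠ Z' ∧ (⋃ a ∈ Z.1, C a) ∩ (⋃ a ∈ Z'.1, C a) = ∅
  symm := by
    refine ⟨?_⟩
    intro Z Z' h
    exact ⟨h.1.symm, by rw [Set.inter_comm]; exact h.2⟩
  loopless := by
    refine ⟨?_⟩
    intro Z h
    exact h.1 rfl

section Aux

open Classical

variable {U : Type*} [DecidableEq U] (C : U → Set U)

/-- One coverage-overlap step inside `A`. -/
def Step (A : Finset U) (a b : U) : Prop :=
  a ∈ A ∧ b ∈ A ∧ (C a ∩ C b).Nonempty

/-- Coverage connectivity inside `A`. -/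
def Reach (A : Finset U) : U → U → Prop := Relation.ReflTransGen (Step C A)

variable {C}

lemma step_symm {A : Finset U} {a b : U} (h : Step C A a b) : Step C A b a :=
  ⟨h.2.1, h.1, by obtain ⟨x, hx⟩ := h.2.2; exact ⟨x, hx.2, hx.1⟩⟩

lemma reach_symm {A : Finset U} {a b : U} (h : Reach C A a b) : Reach C A b a :=
  (@Relation.ReflTransGen.stdSymm _ _ ⟨fun _ _ h => step_symm h⟩).symm _ _ h

lemma reach_mono {A B : Finset U} (hAB : A ⊆ B) {a b : U} (h : Reach C A a b) :
    Reach C B a b :=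
  Relation.ReflTransGen.mono (r := Step C A) (p := Step C B)
    (fun _ _ (hs : Step C A _ _) => (⟨hAB hs.1, hAB hs.2.1, hs.2.2⟩ : Step C B _ _)) _ _ h

lemma reach_mem_right {A : Finset U} {a b : U} (ha : a ∈ A) (h : Reach C A a b) :
    b ∈ A := by
  induction h with
  | refl => exact ha
  | tail _ hs _ => exact hs.2.1

lemma mem_biUnion_cov {Y : Finset U} {c x : U} (hc : c ∈ Y) (hx : x ∈ C c) :
    x ∈ ⋃ a ∈ Y, C a := by
  exact Set.mem_biUnion hc hx

/-- A chain from inside `Y` to outside `Y` produces a crossing pair. -/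
lemma crossing {Z Y : Finset U} {a b : U} (h : Reach C Z a b) (ha : a ∈ Y)
    (hb : b ∉ Y) : ((⋃ c ∈ Y, C c) ∩ (⋃ c ∈ Z \ Y, C c)).Nonempty := by
  induction h with
  | refl => exact absurd ha hb
  | @tail c b hac hs ih =>
    by_cases hc : c ∈ Y
    · obtain ⟨x, hx1, hx2⟩ := hs.2.2
      exact ⟨x, mem_biUnion_cov hc hx1,
        mem_biUnion_cov (Finset.mem_sdiff.2 ⟨hs.2.1, hb⟩) hx2⟩
    · exact ih hc

lemma isCluster_iff {Z : Finset U} :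
    IsCluster C Z ↔ Z.Nonempty ∧ ∀ a ∈ Z, ∀ b ∈ Z, Reach C Z a b := by
  constructor
  · rintro ⟨hne, hconn⟩
    refine ⟨hne, fun a ha b hb => ?_⟩
    set Y : Finset U := Z.filter (fun b => Reach C Z a b) with hY
    have haY : a ∈ Y := Finset.mem_filter.2 ⟨ha, Relation.ReflTransGen.refl⟩
    by_cases hYZ : Y = Z
    · have := hYZ ▸ hb
      exact (Finset.mem_filter.1 this).2
    · exfalso
      obtain ⟨x, hx1, hx2⟩ := hconn Y (Finset.filter_subset _ _) ⟨a, haY⟩ hYZ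
      simp only [Set.mem_iUnion] at hx1 hx2
      obtain ⟨c, hc, hxc⟩ := hx1
      obtain ⟨d, hd, hxd⟩ := hx2
      have hd' := Finset.mem_sdiff.1 hd
      have : d ∈ Y := Finset.mem_filter.2 ⟨hd'.1,
        (Finset.mem_filter.1 hc).2.tail ⟨(Finset.mem_filter.1 hc).1, hd'.1, ⟨x, hxc, hxd⟩⟩⟩
      exact hd'.2 this
  · rintro ⟨hne, hconn⟩
    refine ⟨hne, fun Y hYZ hYne hYneZ => ?_⟩
    obtain ⟨a, ha⟩ := hYne
    obtain ⟨b, hbZ, hbY⟩ : ∃ b ∈ Z, b ∉ Y := by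
      by_contra h
      push_neg at h
      exact hYneZ (Finset.Subset.antisymm hYZ h)
    exact crossing (hconn a (hYZ ha) b hbZ) ha hbY

variable (C) in
/-- The coverage-connected component of `a` in `A`. -/
noncomputable def comp (A : Finset U) (a : U) : Finset U :=
  A.filter (fun b => Reach C A a b)

lemma mem_comp {A : Finset U} {a b : U} :
    b ∈ comp C A a ↔ b ∈ A ∧ Reach C A a b := Finset.mem_filter

lemma comp_subset {A : Finset U} {a : U} : comp C A a ⊆ A := Finset.filter_subset _ _

lemma self_mem_comp {A : Finset U} {a : U} (ha : a ∈ A) : a ∈ comp C A a :=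
  mem_comp.2 ⟨ha, Relation.ReflTransGen.refl⟩

lemma reach_comp {A : Finset U} {a b : U} (ha : a ∈ A) (h : Reach C A a b) :
    Reach C (comp C A a) a b := by
  induction h with
  | refl => exact Relation.ReflTransGen.refl
  | @tail c b hac hs ih =>
    exact ih.tail ⟨mem_comp.2 ⟨hs.1, hac⟩, mem_comp.2 ⟨hs.2.1, hac.tail hs⟩, hs.2.2⟩

lemma comp_isCluster {A : Finset U} {a : U} (ha : a ∈ A) :
    IsCluster C (comp C A a) := by
  rw [isCluster_iff]
  refine ⟨⟨a, self_mem_comp ha⟩, fun b hb c hc => ?_⟩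
  exact (reach_symm (reach_comp ha (mem_comp.1 hb).2)).trans
    (reach_comp ha (mem_comp.1 hc).2)

lemma comp_eq_of_reach {A : Finset U} {a b : U} (h : Reach C A a b) :
    comp C A a = comp C A b := by
  ext x
  simp only [mem_comp]
  exact ⟨fun hx => ⟨hx.1, (reach_symm h).trans hx.2⟩, fun hx => ⟨hx.1, h.trans hx.2⟩⟩

/-- Each cluster in a clique is the coverage component of any of its points in
the union. -/
lemma cluster_eq_comp {𝔷 : Finset {Z : Finset U // IsCluster C Z}}
    (hc : (extendedCooperationGraph C).IsClique (𝔷 : Set {Z : Finset U // IsCluster C Z}))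
    {Z : {Z : Finset U // IsCluster C Z}} (hZ : Z ∈ 𝔷) {a : U} (ha : a ∈ Z.1) :
    Z.1 = comp C (𝔷.biUnion (fun Z => Z.1)) a := by
  set A : Finset U := 𝔷.biUnion (fun Z => Z.1) with hA
  have hZA : Z.1 ⊆ A := fun x hx => Finset.mem_biUnion.2 ⟨Z, hZ, hx⟩
  apply Finset.Subset.antisymm
  · intro b hb
    exact mem_comp.2 ⟨hZA hb,
      reach_mono hZA (((isCluster_iff.1 Z.2).2 a ha b hb))⟩
  · intro b hb
    obtain ⟨hbA, hreach⟩ := mem_comp.1 hb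
    clear hb
    induction hreach with
    | refl => exact ha
    | @tail c b hac hs ih =>
      have hcZ : c ∈ Z.1 := ih hs.1
      obtain ⟨Z', hZ', hbZ'⟩ := Finset.mem_biUnion.1 hs.2.1
      by_cases hZZ' : Z = Z'
      · exact hZZ' ▸ hbZ'
      · exfalso
        have hadj := hc hZ hZ' hZZ'
        obtain ⟨x, hx1, hx2⟩ := hs.2.2
        have : x ∈ (⋃ a ∈ Z.1, C a) ∩ (⋃ a ∈ Z'.1, C a) :=
          ⟨mem_biUnion_cov hcZ hx1, mem_biUnion_cov hbZ' hx2⟩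
        rw [hadj.2] at this
        exact this

lemma clique_subset_of_union_eq {𝔷 𝔷' : Finset {Z : Finset U // IsCluster C Z}}
    (hc : (extendedCooperationGraph C).IsClique (𝔷 : Set {Z : Finset U // IsCluster C Z}))
    (hc' : (extendedCooperationGraph C).IsClique (𝔷' : Set {Z : Finset U // IsCluster C Z}))
    (hU : 𝔷.biUnion (fun Z => Z.1) = 𝔷'.biUnion (fun Z => Z.1)) : 𝔷 ⊆ 𝔷' := by
  intro Z hZ
  obtain ⟨a, ha⟩ := Z.2.1
  have haA : a ∈ 𝔷'.biUnion (fun Z => Z.1) := by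
    rw [← hU]; exact Finset.mem_biUnion.2 ⟨Z, hZ, ha⟩
  obtain ⟨Z', hZ', haZ'⟩ := Finset.mem_biUnion.1 haA
  have : Z.1 = Z'.1 := by
    rw [cluster_eq_comp hc hZ ha, cluster_eq_comp hc' hZ' haZ', hU]
  have : Z = Z' := Subtype.ext this
  exact this ▸ hZ'

end Aux

/-- The map sending a finite clique of the extended cooperation graph to the
union of its clusters is a bijection onto the finite subsets of `U`: every
finite subset `A` of `U` is the union of a unique finite clique of clusters. -/
theorem extended_cooperation_graph_clique_bijection {U : Type*} [DecidableEq U]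
    (C : U → Set U) (hrefl : ∀ u, u ∈ C u) :
    Function.Bijective
      (fun 𝔷 : {𝔷 : Finset {Z : Finset U // IsCluster C Z} //
          (extendedCooperationGraph C).IsClique (𝔷 : Set {Z : Finset U // IsCluster C Z})} =>
        (𝔷.1.biUnion (fun Z => Z.1) : Finset U)) := by
  constructor
  · rintro ⟨𝔷, hc⟩ ⟨𝔷', hc'⟩ h
    simp only at h
    exact Subtype.ext (Finset.Subset.antisymm
      (clique_subset_of_union_eq hc hc' h)
      (clique_subset_of_union_eq hc' hc h.symm))
  · intro A
    refine ⟨⟨A.attach.image (fun a =>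
      (⟨comp C A a.1, comp_isCluster a.2⟩ : {Z : Finset U // IsCluster C Z})), ?_⟩, ?_⟩
    · intro Z₁ h₁ Z₂ h₂ hne
      simp only [Finset.coe_image, Set.mem_image, Finset.mem_coe, Finset.mem_attach,
        true_and] at h₁ h₂
      obtain ⟨⟨a, haA⟩, rfl⟩ := h₁
      obtain ⟨⟨b, hbA⟩, rfl⟩ := h₂
      refine ⟨hne, ?_⟩
      by_contra hx
      obtain ⟨x, hx1, hx2⟩ := Set.nonempty_iff_ne_empty.2 hx
      simp only [Set.mem_iUnion] at hx1 hx2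
      obtain ⟨c, hc, hxc⟩ := hx1
      obtain ⟨d, hd, hxd⟩ := hx2
      have hc' := mem_comp.1 hc
      have hd' := mem_comp.1 hd
      have hab : Reach C A a b :=
        ((hc'.2.tail ⟨hc'.1, hd'.1, ⟨x, hxc, hxd⟩⟩).trans (reach_symm hd'.2))
      exact hne (Subtype.ext (comp_eq_of_reach hab))
    · simp only
      ext x
      simp only [Finset.mem_biUnion, Finset.mem_image, Finset.mem_attach, true_and]
      constructor
      · rintro ⟨Z, ⟨⟨a, haA⟩, rfl⟩, hx⟩
        exact comp_subset hx
      · intro hx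
        exact ⟨_, ⟨⟨x, hx⟩, rfl⟩, self_mem_comp hx⟩
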